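/- Let b1 = (s2 + s3 + σT1·σT2)/(s0 + s2 + s3) and b2 = (s0 − σT1·σT2)/(s0 + s2 + s3), and define B̃3 = U1 − b1·X − b2·U'2. Then B̃3 has mean zero, E[B̃3·X] = 0, E[B̃3·U'2] = 0, and E[B̃3²] = (s0·(σT1 + σT2)² + s3·(s0 + s1)) / (s0 + s2 + s3). That is, B̃3 is the Gram–Schmidt residual of U1 against (X, U'2), with the stated linear MMSE error variance. -/

import Mathlib

open MeasureTheory ProbabilityTheory

private lemma int5 {Ω : Type*} [MeasurableSpace Ω] {μ : Measure Ω}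
    {f1 f2 f3 f4 f5 : Ω → ℝ} {A1 A2 A3 A4 A5 : ℝ} (c1 c2 c3 c4 c5 : ℝ)
    (h1 : Integrable f1 μ) (h2 : Integrable f2 μ) (h3 : Integrable f3 μ)
    (h4 : Integrable f4 μ) (h5 : Integrable f5 μ)
    (v1 : ∫ ω, f1 ω ∂μ = A1) (v2 : ∫ ω, f2 ω ∂μ = A2) (v3 : ∫ ω, f3 ω ∂μ = A3)
    (v4 : ∫ ω, f4 ω ∂μ = A4) (v5 : ∫ ω, f5 ω ∂μ = A5) :
    ∫ ω, c1 * f1 ω + c2 * f2 ω + c3 * f3 ω + c4 * f4 ω + c5 * f5 ω ∂μ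
      = c1 * A1 + c2 * A2 + c3 * A3 + c4 * A4 + c5 * A5 := by
  have e1 := h1.const_mul c1
  have e2 := h2.const_mul c2
  have e3 := h3.const_mul c3
  have e4 := h4.const_mul c4
  have e5 := h5.const_mul c5
  have H2 : Integrable (fun ω => c1 * f1 ω + c2 * f2 ω) μ := e1.add e2
  have H3 : Integrable (fun ω => c1 * f1 ω + c2 * f2 ω + c3 * f3 ω) μ := H2.add e3
  have H4 : Integrable (fun ω => c1 * f1 ω + c2 * f2 ω + c3 * f3 ω + c4 * f4 ω) μ := H3.add e4
  rw [integral_add H4 e5, integral_add H3 e4, integral_add H2 e3, integral_add e1 e2,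
      integral_const_mul, integral_const_mul, integral_const_mul,
      integral_const_mul, integral_const_mul, v1, v2, v3, v4, v5]

set_option maxHeartbeats 1000000

/-- `B̃3 = U1 − b1·X − b2·U'2` is the Gram–Schmidt residual of `U1` against `(X, U'2)`:
it has mean zero, is uncorrelated with `X` and `U'2`, and its variance is the linear
MMSE error `(s0·(σT1+σT2)² + s3·(s0+s1))/(s0+s2+s3)`. -/
theorem gram_schmidt_residual_Bt3
    {Ω : Type*} [MeasurableSpace Ω] (μ : Measure Ω) [IsProbabilityMeasure μ]
    (σ2 D1 D2 D3 s0 s1 s2 s3 : ℝ)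
    (hσ : 0 < σ2)
    (hD3pos : 0 < D3) (hD3leD1 : D3 ≤ D1) (hD1 : D1 < σ2)
    (hD3leD2 : D3 ≤ D2) (hD2 : D2 < σ2)
    (hs0 : s0 = D3 * σ2 / (σ2 - D3))
    (hs1 : s1 = D1 * σ2 / (σ2 - D1) - s0)
    (hs2 : s2 = D2 * σ2 / (σ2 - D2) - s0)
    (hs3 : 0 ≤ s3)
    (X T0 T1 T2 T3 : Ω → ℝ)
    (hX2 : MemLp X 2 μ) (hT02 : MemLp T0 2 μ) (hT12 : MemLp T1 2 μ)
    (hT22 : MemLp T2 2 μ) (hT32 : MemLp T3 2 μ)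
    (hXmean : ∫ ω, X ω ∂μ = 0) (hT0mean : ∫ ω, T0 ω ∂μ = 0)
    (hT1mean : ∫ ω, T1 ω ∂μ = 0) (hT2mean : ∫ ω, T2 ω ∂μ = 0)
    (hT3mean : ∫ ω, T3 ω ∂μ = 0)
    (hXvar : ∫ ω, (X ω) ^ 2 ∂μ = σ2)
    (hT0var : ∫ ω, (T0 ω) ^ 2 ∂μ = s0)
    (hT1var : ∫ ω, (T1 ω) ^ 2 ∂μ = s1)
    (hT2var : ∫ ω, (T2 ω) ^ 2 ∂μ = s2)
    (hT3var : ∫ ω, (T3 ω) ^ 2 ∂μ = s3)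
    (hT1T2 : ∫ ω, T1 ω * T2 ω ∂μ = -(Real.sqrt s1 * Real.sqrt s2))
    -- `X`, `T0` and the pair `(T1, T2)` are mutually independent
    (hIndep1 : IndepFun X T0 μ)
    (hIndep2 : IndepFun (fun ω => (X ω, T0 ω)) (fun ω => (T1 ω, T2 ω)) μ)
    -- `T3` is independent of `(X, T0, T1, T2)`
    (hIndep3 : IndepFun (fun ω => (X ω, T0 ω, T1 ω, T2 ω)) T3 μ)
    (U1 U2 U2' : Ω → ℝ)
    (hU1 : U1 = fun ω => X ω + T0 ω + T1 ω)
    (hU2 : U2 = fun ω => X ω + T0 ω + T2 ω)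
    (hU2' : U2' = fun ω => U2 ω + T3 ω)
    (b1 b2 : ℝ)
    (hb1 : b1 = (s2 + s3 + Real.sqrt s1 * Real.sqrt s2) / (s0 + s2 + s3))
    (hb2 : b2 = (s0 - Real.sqrt s1 * Real.sqrt s2) / (s0 + s2 + s3))
    (Bt3 : Ω → ℝ)
    (hBt3 : Bt3 = fun ω => U1 ω - b1 * X ω - b2 * U2' ω) :
    (∫ ω, Bt3 ω ∂μ = 0) ∧
    (∫ ω, Bt3 ω * X ω ∂μ = 0) ∧
    (∫ ω, Bt3 ω * U2' ω ∂μ = 0) ∧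
    (∫ ω, (Bt3 ω) ^ 2 ∂μ
      = (s0 * (Real.sqrt s1 + Real.sqrt s2) ^ 2 + s3 * (s0 + s1)) / (s0 + s2 + s3)) := by
  -- positivity facts
  have hσD3 : 0 < σ2 - D3 := by linarith
  have hσD1 : 0 < σ2 - D1 := by linarith
  have hσD2 : 0 < σ2 - D2 := by linarith
  have hs0pos : 0 < s0 := by
    rw [hs0]; exact div_pos (mul_pos hD3pos hσ) hσD3
  have hs1nonneg : 0 ≤ s1 := by
    rw [hs1, hs0, sub_nonneg, div_le_div_iff₀ hσD3 hσD1]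
    nlinarith [mul_nonneg (mul_nonneg hσ.le hσ.le) (sub_nonneg.mpr hD3leD1)]
  have hs2nonneg : 0 ≤ s2 := by
    rw [hs2, hs0, sub_nonneg, div_le_div_iff₀ hσD3 hσD2]
    nlinarith [mul_nonneg (mul_nonneg hσ.le hσ.le) (sub_nonneg.mpr hD3leD2)]
  have hd : 0 < s0 + s2 + s3 := by linarith
  have hA : Real.sqrt s1 ^ 2 = s1 := Real.sq_sqrt hs1nonneg
  have hB : Real.sqrt s2 ^ 2 = s2 := Real.sq_sqrt hs2nonneg
  -- MemLp facts
  have hU2'eq : U2' = fun ω => X ω + T0 ω + T2 ω + T3 ω := by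
    funext ω; simp only [hU2', hU2]
  have hU2'2 : MemLp U2' 2 μ := by
    rw [hU2'eq]; exact ((hX2.add hT02).add hT22).add hT32
  have hBt3' : Bt3 = fun ω => (1 - b1 - b2) * X ω + (1 - b2) * T0 ω + 1 * T1 ω
      + (-b2) * T2 ω + (-b2) * T3 ω := by
    funext ω; simp only [hBt3, hU1, hU2', hU2]; ring
  have hBt32 : MemLp Bt3 2 μ := by
    rw [hBt3']
    exact ((((hX2.const_mul _).add (hT02.const_mul _)).add (hT12.const_mul _)).add
      (hT22.const_mul _)).add (hT32.const_mul _)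
  -- product integrability
  have imul : ∀ {f g : Ω → ℝ}, MemLp f 2 μ → MemLp g 2 μ →
      Integrable (fun ω => f ω * g ω) μ := fun {f g} hf hg =>
    memLp_one_iff_integrable.mp (hg.smul (r := 1) hf)
  -- independence of components
  have zmul : ∀ {f g : Ω → ℝ}, IndepFun f g μ → MemLp f 2 μ → MemLp g 2 μ →
      (∫ ω, f ω ∂μ = 0) → (∫ ω, g ω ∂μ = 0) → ∫ ω, f ω * g ω ∂μ = 0 := by
    intro f g hi hf hg hf0 hg0
    have h := hi.integral_mul_eq_mul_integral hf.aestronglyMeasurable hg.aestronglyMeasurable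
    simpa [hf0, hg0] using h
  have iXT1 : IndepFun X T1 μ := hIndep2.comp measurable_fst measurable_fst
  have iXT2 : IndepFun X T2 μ := hIndep2.comp measurable_fst measurable_snd
  have iT0T1 : IndepFun T0 T1 μ := hIndep2.comp measurable_snd measurable_fst
  have iT0T2 : IndepFun T0 T2 μ := hIndep2.comp measurable_snd measurable_snd
  have iXT3 : IndepFun X T3 μ := hIndep3.comp measurable_fst measurable_id
  have iT0T3 : IndepFun T0 T3 μ :=
    hIndep3.comp (measurable_fst.comp measurable_snd) measurable_id
  have iT1T3 : IndepFun T1 T3 μ :=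
    hIndep3.comp (measurable_fst.comp (measurable_snd.comp measurable_snd)) measurable_id
  have iT2T3 : IndepFun T2 T3 μ :=
    hIndep3.comp (measurable_snd.comp (measurable_snd.comp measurable_snd)) measurable_id
  -- canonical pairwise moments
  have pXX : ∫ ω, X ω * X ω ∂μ = σ2 := by simpa only [pow_two] using hXvar
  have pT0T0 : ∫ ω, T0 ω * T0 ω ∂μ = s0 := by simpa only [pow_two] using hT0var
  have pT1T1 : ∫ ω, T1 ω * T1 ω ∂μ = s1 := by simpa only [pow_two] using hT1var
  have pT2T2 : ∫ ω, T2 ω * T2 ω ∂μ = s2 := by simpa only [pow_two] using hT2var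
  have pT3T3 : ∫ ω, T3 ω * T3 ω ∂μ = s3 := by simpa only [pow_two] using hT3var
  have pT1T2 : ∫ ω, T1 ω * T2 ω ∂μ = -(Real.sqrt s1 * Real.sqrt s2) := hT1T2
  have pXT0 : ∫ ω, X ω * T0 ω ∂μ = 0 := zmul hIndep1 hX2 hT02 hXmean hT0mean
  have pXT1 : ∫ ω, X ω * T1 ω ∂μ = 0 := zmul iXT1 hX2 hT12 hXmean hT1mean
  have pXT2 : ∫ ω, X ω * T2 ω ∂μ = 0 := zmul iXT2 hX2 hT22 hXmean hT2mean
  have pXT3 : ∫ ω, X ω * T3 ω ∂μ = 0 := zmul iXT3 hX2 hT32 hXmean hT3mean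
  have pT0T1 : ∫ ω, T0 ω * T1 ω ∂μ = 0 := zmul iT0T1 hT02 hT12 hT0mean hT1mean
  have pT0T2 : ∫ ω, T0 ω * T2 ω ∂μ = 0 := zmul iT0T2 hT02 hT22 hT0mean hT2mean
  have pT0T3 : ∫ ω, T0 ω * T3 ω ∂μ = 0 := zmul iT0T3 hT02 hT32 hT0mean hT3mean
  have pT1T3 : ∫ ω, T1 ω * T3 ω ∂μ = 0 := zmul iT1T3 hT12 hT32 hT1mean hT3mean
  have pT2T3 : ∫ ω, T2 ω * T3 ω ∂μ = 0 := zmul iT2T3 hT22 hT32 hT2mean hT3mean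
  -- mean of Bt3
  have goal1 : ∫ ω, Bt3 ω ∂μ = 0 := by
    rw [hBt3']
    rw [int5 (1 - b1 - b2) (1 - b2) 1 (-b2) (-b2)
      (hX2.integrable one_le_two) (hT02.integrable one_le_two) (hT12.integrable one_le_two)
      (hT22.integrable one_le_two) (hT32.integrable one_le_two)
      hXmean hT0mean hT1mean hT2mean hT3mean]
    ring
  -- ∫ fᵢ * Bt3
  have eX : (fun ω => X ω * Bt3 ω) = fun ω => (1 - b1 - b2) * (X ω * X ω)
      + (1 - b2) * (X ω * T0 ω) + 1 * (X ω * T1 ω) + (-b2) * (X ω * T2 ω)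
      + (-b2) * (X ω * T3 ω) := by
    funext ω; simp only [hBt3']; ring
  have iXB : ∫ ω, X ω * Bt3 ω ∂μ = (1 - b1 - b2) * σ2 := by
    rw [eX, int5 _ _ _ _ _ (imul hX2 hX2) (imul hX2 hT02) (imul hX2 hT12)
      (imul hX2 hT22) (imul hX2 hT32) pXX pXT0 pXT1 pXT2 pXT3]
    ring
  have eT0 : (fun ω => T0 ω * Bt3 ω) = fun ω => (1 - b1 - b2) * (X ω * T0 ω)
      + (1 - b2) * (T0 ω * T0 ω) + 1 * (T0 ω * T1 ω) + (-b2) * (T0 ω * T2 ω)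
      + (-b2) * (T0 ω * T3 ω) := by
    funext ω; simp only [hBt3']; ring
  have iT0B : ∫ ω, T0 ω * Bt3 ω ∂μ = (1 - b2) * s0 := by
    rw [eT0, int5 _ _ _ _ _ (imul hX2 hT02) (imul hT02 hT02) (imul hT02 hT12)
      (imul hT02 hT22) (imul hT02 hT32) pXT0 pT0T0 pT0T1 pT0T2 pT0T3]
    ring
  have eT1 : (fun ω => T1 ω * Bt3 ω) = fun ω => (1 - b1 - b2) * (X ω * T1 ω)
      + (1 - b2) * (T0 ω * T1 ω) + 1 * (T1 ω * T1 ω) + (-b2) * (T1 ω * T2 ω)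
      + (-b2) * (T1 ω * T3 ω) := by
    funext ω; simp only [hBt3']; ring
  have iT1B : ∫ ω, T1 ω * Bt3 ω ∂μ = s1 + b2 * (Real.sqrt s1 * Real.sqrt s2) := by
    rw [eT1, int5 _ _ _ _ _ (imul hX2 hT12) (imul hT02 hT12) (imul hT12 hT12)
      (imul hT12 hT22) (imul hT12 hT32) pXT1 pT0T1 pT1T1 pT1T2 pT1T3]
    ring
  have eT2 : (fun ω => T2 ω * Bt3 ω) = fun ω => (1 - b1 - b2) * (X ω * T2 ω)
      + (1 - b2) * (T0 ω * T2 ω) + 1 * (T1 ω * T2 ω) + (-b2) * (T2 ω * T2 ω)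
      + (-b2) * (T2 ω * T3 ω) := by
    funext ω; simp only [hBt3']; ring
  have iT2B : ∫ ω, T2 ω * Bt3 ω ∂μ = -(Real.sqrt s1 * Real.sqrt s2) - b2 * s2 := by
    rw [eT2, int5 _ _ _ _ _ (imul hX2 hT22) (imul hT02 hT22) (imul hT12 hT22)
      (imul hT22 hT22) (imul hT22 hT32) pXT2 pT0T2 pT1T2 pT2T2 pT2T3]
    ring
  have eT3 : (fun ω => T3 ω * Bt3 ω) = fun ω => (1 - b1 - b2) * (X ω * T3 ω)
      + (1 - b2) * (T0 ω * T3 ω) + 1 * (T1 ω * T3 ω) + (-b2) * (T2 ω * T3 ω)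
      + (-b2) * (T3 ω * T3 ω) := by
    funext ω; simp only [hBt3']; ring
  have iT3B : ∫ ω, T3 ω * Bt3 ω ∂μ = -b2 * s3 := by
    rw [eT3, int5 _ _ _ _ _ (imul hX2 hT32) (imul hT02 hT32) (imul hT12 hT32)
      (imul hT22 hT32) (imul hT32 hT32) pXT3 pT0T3 pT1T3 pT2T3 pT3T3]
    ring
  -- goal 2
  have goal2 : ∫ ω, Bt3 ω * X ω ∂μ = 0 := by
    have comm : ∫ ω, Bt3 ω * X ω ∂μ = ∫ ω, X ω * Bt3 ω ∂μ := by
      congr 1; funext ω; ring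
    rw [comm, iXB, hb1, hb2]
    field_simp
    ring
  -- goal 3
  have goal3 : ∫ ω, Bt3 ω * U2' ω ∂μ = 0 := by
    have e : (fun ω => Bt3 ω * U2' ω) = fun ω => 1 * (X ω * Bt3 ω)
        + 1 * (T0 ω * Bt3 ω) + 0 * (T1 ω * Bt3 ω) + 1 * (T2 ω * Bt3 ω)
        + 1 * (T3 ω * Bt3 ω) := by
      funext ω; simp only [hU2'eq]; ring
    rw [e, int5 _ _ _ _ _ (imul hX2 hBt32) (imul hT02 hBt32) (imul hT12 hBt32)
      (imul hT22 hBt32) (imul hT32 hBt32) iXB iT0B iT1B iT2B iT3B, hb1, hb2]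
    field_simp
    ring
  -- goal 4
  have goal4 : ∫ ω, (Bt3 ω) ^ 2 ∂μ
      = (s0 * (Real.sqrt s1 + Real.sqrt s2) ^ 2 + s3 * (s0 + s1)) / (s0 + s2 + s3) := by
    have e : (fun ω => (Bt3 ω) ^ 2) = fun ω => (1 - b1 - b2) * (X ω * Bt3 ω)
        + (1 - b2) * (T0 ω * Bt3 ω) + 1 * (T1 ω * Bt3 ω) + (-b2) * (T2 ω * Bt3 ω)
        + (-b2) * (T3 ω * Bt3 ω) := by
      funext ω; simp only [hBt3']; ring
    rw [e, int5 _ _ _ _ _ (imul hX2 hBt32) (imul hT02 hBt32) (imul hT12 hBt32)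
      (imul hT22 hBt32) (imul hT32 hBt32) iXB iT0B iT1B iT2B iT3B, hb1, hb2]
    set A := Real.sqrt s1 with hAdef
    set B := Real.sqrt s2 with hBdef
    have hdne : s0 + s2 + s3 ≠ 0 := ne_of_gt hd
    rw [← hB] at hdne
    rw [← hA, ← hB]
    field_simp
    ring
  exact ⟨goal1, goal2, goal3, goal4⟩
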